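/- Fix m ≥ 2. Let F(t) ∈ Q(v)[[t]], F(0) = 1, satisfy F(t) = Π_{i=1}^{m}(1 − v^{2i−m−1} t Π_{j=1}^{m−2} F(v^{2i−2j−2}t))^{−1}. Define T_i = 1 − v^{2i−m} t Π_{j=1}^{m−2} F(v^{2i−2j−1} t) for 0 ≤ i ≤ m. Then F(vt) = (T_1 ⋯ T_m)^{−1}, F(v^{−1}t) = (T_0 ⋯ T_{m−1})^{−1}, and consequently ΔF(t) = F(vt)·(T_0 − T_m)/((v − v^{−1})·T_0), where (ΔF)(t) = (F(vt) − F(v^{−1}t))/(v − v^{−1}). -/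

import Mathlib

open PowerSeries Finset

noncomputable section

/-- The field `ℚ(v)` of rational functions. -/
abbrev K : Type := RatFunc ℚ

/-- The variable `v`. -/
def v : K := RatFunc.X

/-- `scale a B` is the series `B(v^a t)`: the `t^d`-coefficient is multiplied by `v^(a*d)`. -/
def scale (a : ℤ) (B : PowerSeries K) : PowerSeries K :=
  PowerSeries.mk fun d => v ^ (a * d) * PowerSeries.coeff d B

/-- `(ΔB)(t) = (B(vt) - B(v⁻¹t))/(v - v⁻¹)`. -/
def delta (B : PowerSeries K) : PowerSeries K :=
  PowerSeries.C ((v - v⁻¹)⁻¹) * (scale 1 B - scale (-1) B)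

/-- `(∇^(k)B)(t) = (v·B(v^k t) - v⁻¹·B(v^{-k} t))/(v - v⁻¹)`. -/
def nabla (k : ℤ) (B : PowerSeries K) : PowerSeries K :=
  PowerSeries.C ((v - v⁻¹)⁻¹) *
    (PowerSeries.C v * scale k B - PowerSeries.C v⁻¹ * scale (-k) B)

/-- The right-hand side of the algebraic functional equation. -/
def rhsF (m : ℕ) (F : PowerSeries K) : PowerSeries K :=
  ∏ i ∈ Finset.Icc 1 m,
    (1 - PowerSeries.C (v ^ (2 * (i : ℤ) - m - 1)) * PowerSeries.X *
        ∏ j ∈ Finset.Icc 1 (m - 2), scale (2 * (i : ℤ) - 2 * (j : ℤ) - 2) F)⁻¹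

/-- The factor `T_i = 1 - v^(2i-m)·t·Π_{j=1}^{m-2} F(v^(2i-2j-1) t)`. -/
def Tfac (m : ℕ) (F : PowerSeries K) (i : ℕ) : PowerSeries K :=
  1 - PowerSeries.C (v ^ (2 * (i : ℤ) - m)) * PowerSeries.X *
      ∏ j ∈ Finset.Icc 1 (m - 2), scale (2 * (i : ℤ) - 2 * (j : ℤ) - 1) F

lemma v_ne : v ≠ 0 := RatFunc.X_ne_zero

lemma scale_eq (a : ℤ) (B : PowerSeries K) : scale a B = rescale (v ^ a) B := by
  ext d
  rw [coeff_rescale]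
  simp only [scale, coeff_mk]
  rw [← zpow_natCast (v ^ a) d, ← zpow_mul]

lemma scale_scale (a b : ℤ) (B : PowerSeries K) :
    scale a (scale b B) = scale (a + b) B := by
  ext d
  simp only [scale, coeff_mk, ← mul_assoc, ← zpow_add₀ v_ne]
  congr 2
  ring

lemma scale_C (a : ℤ) (c : K) : scale a (PowerSeries.C c) = PowerSeries.C c := by
  rw [scale_eq]
  ext d
  rcases eq_or_ne d 0 with rfl | hd
  · simp [coeff_rescale]
  · simp [coeff_rescale, coeff_C, hd]

lemma scale_X (a : ℤ) : scale a PowerSeries.X = PowerSeries.C (v ^ a) * PowerSeries.X := by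
  rw [scale_eq, rescale_X]

lemma const_scale (a : ℤ) (B : PowerSeries K) :
    PowerSeries.constantCoeff (scale a B) = PowerSeries.constantCoeff B := by
  simp [← coeff_zero_eq_constantCoeff, scale]

lemma scale_inv (a : ℤ) (B : PowerSeries K) (h : PowerSeries.constantCoeff B ≠ 0) :
    scale a B⁻¹ = (scale a B)⁻¹ := by
  rw [PowerSeries.eq_inv_iff_mul_eq_one]
  · rw [scale_eq, scale_eq, ← map_mul, PowerSeries.inv_mul_cancel _ h, map_one]
  · rwa [const_scale]

lemma prod_inv (s : Finset ℕ) (f : ℕ → PowerSeries K) :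
    ∏ i ∈ s, (f i)⁻¹ = (∏ i ∈ s, f i)⁻¹ := by
  induction s using Finset.cons_induction with
  | empty => simp
  | cons a s ha ih =>
      rw [Finset.prod_cons, Finset.prod_cons, ih, PowerSeries.mul_inv_rev, mul_comm]

lemma scale_Tshape (a : ℤ) (c : K) (s : ℕ) (b : ℕ → ℤ) (F : PowerSeries K) :
    scale a (1 - PowerSeries.C c * PowerSeries.X * ∏ j ∈ Finset.Icc 1 s, scale (b j) F)
      = 1 - PowerSeries.C (v ^ a * c) * PowerSeries.X *
          ∏ j ∈ Finset.Icc 1 s, scale (a + b j) F := by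
  rw [scale_eq, map_sub, map_one, map_mul, map_mul, map_prod, rescale_X]
  simp only [← scale_eq, scale_C, scale_scale]
  rw [map_mul]
  ring

/-- `F(vt) = (T_1⋯T_m)⁻¹`, `F(v⁻¹t) = (T_0⋯T_(m-1))⁻¹`, and consequently
`ΔF(t) = F(vt)·(T_0 - T_m)/((v - v⁻¹)·T_0)`. -/
theorem Tfac_identities (m : ℕ) (hm : 2 ≤ m) (F : PowerSeries K)
    (h0 : PowerSeries.coeff 0 F = 1) (hF : F = rhsF m F) :
    scale 1 F = (∏ i ∈ Finset.Icc 1 m, Tfac m F i)⁻¹ ∧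
    scale (-1) F = (∏ i ∈ Finset.Icc 0 (m - 1), Tfac m F i)⁻¹ ∧
    delta F = PowerSeries.C ((v - v⁻¹)⁻¹) * scale 1 F *
        (Tfac m F 0 - Tfac m F m) * (Tfac m F 0)⁻¹ := by
  set fac : ℕ → PowerSeries K := fun i =>
    1 - PowerSeries.C (v ^ (2 * (i : ℤ) - m - 1)) * PowerSeries.X *
        ∏ j ∈ Finset.Icc 1 (m - 2), scale (2 * (i : ℤ) - 2 * (j : ℤ) - 2) F with hfac
  have hfacc : ∀ i, PowerSeries.constantCoeff (fac i) ≠ 0 := by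
    intro i
    simp [hfac, map_sub, map_mul, constantCoeff_X]
  have key : ∀ a : ℤ, scale a F = ∏ i ∈ Finset.Icc 1 m, (scale a (fac i))⁻¹ := by
    intro a
    conv_lhs => rw [hF]
    rw [rhsF, scale_eq, map_prod]
    refine Finset.prod_congr rfl fun i _ => ?_
    rw [← scale_eq, scale_inv a _ (hfacc i)]
  have hTi : ∀ i : ℕ, scale 1 (fac i) = Tfac m F i := by
    intro i
    simp only [hfac]
    rw [scale_Tshape, Tfac]
    have hc : v ^ (1 : ℤ) * v ^ (2 * (i : ℤ) - m - 1) = v ^ (2 * (i : ℤ) - m) := by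
      rw [← zpow_add₀ v_ne]; congr 1; ring
    have hexp : ∀ j ∈ Finset.Icc 1 (m - 2),
        scale (1 + (2 * (i : ℤ) - 2 * (j : ℤ) - 2)) F
          = scale (2 * (i : ℤ) - 2 * (j : ℤ) - 1) F := by
      intro j _; congr 1; ring
    rw [hc, Finset.prod_congr rfl hexp]
  have hTi' : ∀ i : ℕ, 1 ≤ i → scale (-1) (fac i) = Tfac m F (i - 1) := by
    intro i hi
    simp only [hfac]
    rw [scale_Tshape, Tfac]
    have hcast : ((i - 1 : ℕ) : ℤ) = (i : ℤ) - 1 := by omega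
    have hc : v ^ (-1 : ℤ) * v ^ (2 * (i : ℤ) - m - 1)
        = v ^ (2 * ((i - 1 : ℕ) : ℤ) - m) := by
      rw [← zpow_add₀ v_ne]; congr 1; rw [hcast]; ring
    have hexp : ∀ j ∈ Finset.Icc 1 (m - 2),
        scale (-1 + (2 * (i : ℤ) - 2 * (j : ℤ) - 2)) F
          = scale (2 * ((i - 1 : ℕ) : ℤ) - 2 * (j : ℤ) - 1) F := by
      intro j _; congr 1; rw [hcast]; ring
    rw [hc, Finset.prod_congr rfl hexp]
  have h1 : scale 1 F = (∏ i ∈ Finset.Icc 1 m, Tfac m F i)⁻¹ := by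
    rw [key 1, Finset.prod_congr rfl fun i _ => congrArg Inv.inv (hTi i), prod_inv]
  have h2 : scale (-1) F = (∏ i ∈ Finset.Icc 0 (m - 1), Tfac m F i)⁻¹ := by
    rw [key (-1), Finset.prod_congr rfl fun i hi =>
      congrArg Inv.inv (hTi' i (Finset.mem_Icc.mp hi).1), prod_inv]
    congr 1
    refine Finset.prod_nbij' (fun i => i - 1) (fun i => i + 1) ?_ ?_ ?_ ?_ ?_
    · intro a ha; simp only [Finset.mem_Icc] at ha ⊢; omega
    · intro a ha; simp only [Finset.mem_Icc] at ha ⊢; omega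
    · intro a ha; simp only [Finset.mem_Icc] at ha; show a - 1 + 1 = a; omega
    · intro a ha; simp only [Finset.mem_Icc] at ha; show a + 1 - 1 = a; omega
    · intro a ha; rfl
  refine ⟨h1, h2, ?_⟩
  set T := Tfac m F with hT
  set P := ∏ i ∈ Finset.Icc 1 (m - 1), T i with hP
  have hTc : ∀ i, PowerSeries.constantCoeff (T i) ≠ 0 := by
    intro i
    simp [hT, Tfac, map_sub, map_mul, constantCoeff_X]
  have e1 : ∏ i ∈ Finset.Icc 1 m, T i = P * T m := by
    have hm1 : m - 1 + 1 = m := by omega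
    rw [← hm1, Finset.prod_Icc_succ_top (by omega), hm1, hP]
  have e2 : ∏ i ∈ Finset.Icc 0 (m - 1), T i = T 0 * P := by
    have : Finset.Icc 0 (m - 1) = insert 0 (Finset.Icc 1 (m - 1)) := by
      ext x; simp only [Finset.mem_Icc, Finset.mem_insert]; omega
    rw [this, Finset.prod_insert (by simp)]
  have c0 : T 0 * (T 0)⁻¹ = 1 := PowerSeries.mul_inv_cancel _ (hTc 0)
  have cm : T m * (T m)⁻¹ = 1 := PowerSeries.mul_inv_cancel _ (hTc m)
  rw [delta, h1, h2, e1, e2, PowerSeries.mul_inv_rev, PowerSeries.mul_inv_rev]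
  linear_combination (-(PowerSeries.C ((v - v⁻¹)⁻¹)) * (T m)⁻¹ * P⁻¹) * c0 +
    (PowerSeries.C ((v - v⁻¹)⁻¹) * (T 0)⁻¹ * P⁻¹) * cm
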